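/- For complex numbers α_0, α_1, ..., α_m with each real part greater than −1, the integral over the simplex {u_1,...,u_m ≥ 0, u_1+...+u_m ≤ 1} of ∏_{i=1}^m u_i^{α_i}/Γ(α_i+1) times (1−u_1−...−u_m)^{α_0}/Γ(α_0+1) with respect to du_1...du_m equals 1/Γ(α_0+α_1+...+α_m+m+1). -/

import Mathlib

open MeasureTheory Finset Complex Set

namespace DirichletAux

noncomputable section

def S (m : ℕ) : Set (Fin m → ℝ) := {u : Fin m → ℝ | (∀ i, 0 ≤ u i) ∧ ∑ i, u i ≤ 1}

def F (m : ℕ) (α₀ : ℂ) (α : Fin m → ℂ) (u : Fin m → ℝ) : ℂ :=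
  (∏ i, (u i : ℂ) ^ (α i)) * (((1 - ∑ i, u i : ℝ) : ℂ) ^ α₀)

lemma measurableSet_S (m : ℕ) : MeasurableSet (S m) := by
  rw [S, Set.setOf_and]
  apply MeasurableSet.inter
  · rw [Set.setOf_forall]
    exact MeasurableSet.iInter fun i =>
      measurableSet_le measurable_const (measurable_pi_apply i)
  · exact measurableSet_le (Finset.measurable_sum _ fun i _ => measurable_pi_apply i)
      measurable_const

lemma measurable_F (m : ℕ) (α₀ : ℂ) (α : Fin m → ℂ) : Measurable (F m α₀ α) := by
  apply Measurable.mul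
  · exact Finset.measurable_prod _ fun i _ =>
      (Complex.measurable_ofReal.comp (measurable_pi_apply i)).pow measurable_const
  · exact (Complex.measurable_ofReal.comp
      (measurable_const.sub (Finset.measurable_sum _ fun i _ => measurable_pi_apply i))).pow
      measurable_const

lemma norm_cpow_real {x : ℝ} (hx : 0 ≤ x) (r : ℝ) : ‖(x : ℂ) ^ (r : ℂ)‖ = x ^ r := by
  rw [← Complex.ofReal_cpow hx]
  simp [Real.rpow_nonneg hx, abs_of_nonneg]

lemma null_coord (m : ℕ) (i : Fin m) : volume {v : Fin m → ℝ | v i = 0} = 0 := by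
  classical
  have hset : {v : Fin m → ℝ | v i = 0} =
      Set.pi Set.univ (fun j => if j = i then ({0} : Set ℝ) else Set.univ) := by
    ext v
    simp only [Set.mem_setOf_eq, Set.mem_pi, Set.mem_univ, forall_true_left]
    constructor
    · intro h j
      by_cases hj : j = i
      · subst hj; simp [h]
      · simp [hj]
    · intro h
      have := h i
      simpa using this
  rw [hset, volume_pi_pi]
  exact Finset.prod_eq_zero (Finset.mem_univ i) (by simp)

lemma null_sum_one (m : ℕ) : volume {v : Fin m → ℝ | ∑ i, v i = 1} = 0 := by
  rcases Nat.eq_zero_or_pos m with rfl | hm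
  · have : {v : Fin 0 → ℝ | ∑ i, v i = 1} = ∅ := by ext v; simp
    simp [this]
  · set L : (Fin m → ℝ) →ₗ[ℝ] ℝ := ∑ i, LinearMap.proj i with hL
    have hLv : ∀ v : Fin m → ℝ, L v = ∑ i, v i := fun v => by
      simp [hL, LinearMap.proj_apply]
    set e : Fin m → ℝ := Pi.single ⟨0, hm⟩ 1 with he
    have hesum : ∑ i, e i = 1 := by simp [he, Finset.sum_pi_single]
    have hker : ((LinearMap.ker L : Submodule ℝ (Fin m → ℝ)) : Set (Fin m → ℝ)) =
        {v | ∑ i, v i = 0} := by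
      ext v; simp [LinearMap.mem_ker, hLv]
    have hne : LinearMap.ker L ≠ ⊤ := by
      intro htop
      have he' : e ∈ LinearMap.ker L := htop ▸ Submodule.mem_top
      rw [LinearMap.mem_ker, hLv, hesum] at he'
      norm_num at he'
    have h0 : volume {v : Fin m → ℝ | ∑ i, v i = 0} = 0 := by
      rw [← hker]; exact Measure.addHaar_submodule volume _ hne
    have hpre : (fun v => v + e) ⁻¹' {v : Fin m → ℝ | ∑ i, v i = 1} =
        {v : Fin m → ℝ | ∑ i, v i = 0} := by
      ext v
      simp only [Set.mem_preimage, Set.mem_setOf_eq, Pi.add_apply, Finset.sum_add_distrib, hesum]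
      constructor <;> intro h <;> linarith
    calc volume {v : Fin m → ℝ | ∑ i, v i = 1}
        = volume ((fun v => v + e) ⁻¹' {v : Fin m → ℝ | ∑ i, v i = 1}) :=
          (measure_preimage_add_right volume e _).symm
      _ = 0 := by rw [hpre]; exact h0

/-- Integrability of the scaled beta integrand on `Ioc 0 c`. -/
lemma beta_integrableOn {u v : ℂ} (hu : 0 < u.re) (hv : 0 < v.re) {c : ℝ} (hc : 0 < c) :
    IntegrableOn (fun t : ℝ => (t : ℂ) ^ (u - 1) * (((c - t : ℝ)) : ℂ) ^ (v - 1))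
      (Set.Ioc 0 c) := by
  have h1 := (Complex.betaIntegral_convergent hu hv).comp_mul_left (c := c⁻¹) (h := enorm_ne_top) (h' := enorm_ne_top)
  rw [zero_div, one_div, inv_inv] at h1
  have h2 := h1.const_mul ((c : ℂ) ^ (u - 1) * (c : ℂ) ^ (v - 1))
  rw [intervalIntegrable_iff_integrableOn_Ioc_of_le hc.le] at h2
  refine h2.congr_fun ?_ measurableSet_Ioc
  intro t ht
  have ht0 : 0 < t := ht.1
  have htc : t / c ≤ 1 := (div_le_one hc).mpr ht.2
  have hc' : (c : ℝ) ≠ 0 := hc.ne'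
  have hcc : (c : ℂ) ≠ 0 := Complex.ofReal_ne_zero.mpr hc'
  have h3 : (t : ℂ) ^ (u - 1) = (c : ℂ) ^ (u - 1) * ((c⁻¹ * t : ℝ) : ℂ) ^ (u - 1) := by
    rw [← Complex.mul_cpow_ofReal_nonneg hc.le (by positivity)]
    congr 2
    push_cast
    field_simp [hcc]
  have h4 : ((c - t : ℝ) : ℂ) ^ (v - 1) =
      (c : ℂ) ^ (v - 1) * ((1 : ℂ) - ((c⁻¹ * t : ℝ) : ℂ)) ^ (v - 1) := by
    have h5 : ((1 : ℂ) - ((c⁻¹ * t : ℝ) : ℂ)) = (((1 - c⁻¹ * t : ℝ)) : ℂ) := by push_cast; ring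
    rw [h5, ← Complex.mul_cpow_ofReal_nonneg hc.le]
    · congr 2
      push_cast
      field_simp [hcc]
    · rw [sub_nonneg, ← div_eq_inv_mul]
      exact htc
  dsimp only
  rw [h3, h4]
  ring

/-- The scaled beta integral over `Ioc`. -/
lemma beta_setIntegral {u v : ℂ} (hu : 0 < u.re) (hv : 0 < v.re) {c : ℝ} (hc : 0 < c) :
    ∫ t in Set.Ioc (0:ℝ) c, (t : ℂ) ^ (u - 1) * (((c - t : ℝ)) : ℂ) ^ (v - 1) =
      (c : ℂ) ^ (u + v - 1) * (Complex.Gamma u * Complex.Gamma v / Complex.Gamma (u + v)) := by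
  have hBeta : Complex.betaIntegral u v =
      Complex.Gamma u * Complex.Gamma v / Complex.Gamma (u + v) := by
    have hne : Complex.Gamma (u + v) ≠ 0 :=
      Complex.Gamma_ne_zero_of_re_pos (by rw [Complex.add_re]; positivity)
    rw [eq_div_iff hne, mul_comm, ← Complex.Gamma_mul_Gamma_eq_betaIntegral hu hv]
  have h := Complex.betaIntegral_scaled u v hc
  rw [intervalIntegral.integral_of_le hc.le] at h
  rw [← hBeta, ← h]
  refine setIntegral_congr_fun measurableSet_Ioc fun t _ => ?_
  push_cast
  ring_nf

/-- The real scaled beta integral. -/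
lemma real_beta {a b : ℝ} (ha : -1 < a) (hb : -1 < b) {c : ℝ} (hc : 0 < c) :
    ∫ t in Set.Ioc (0:ℝ) c, t ^ a * (c - t) ^ b =
      c ^ (a + b + 1) *
        (Real.Gamma (a + 1) * Real.Gamma (b + 1) / Real.Gamma (a + b + 2)) := by
  have hu : (0:ℝ) < ((a:ℂ) + 1).re := by
    simp only [Complex.add_re, Complex.ofReal_re, Complex.one_re]; linarith
  have hv : (0:ℝ) < ((b:ℂ) + 1).re := by
    simp only [Complex.add_re, Complex.ofReal_re, Complex.one_re]; linarith
  have h := beta_setIntegral hu hv hc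
  have hcongr : ∫ t in Set.Ioc (0:ℝ) c, (t : ℂ) ^ ((a:ℂ) + 1 - 1) * (((c - t : ℝ)) : ℂ) ^ ((b:ℂ) + 1 - 1) =
      ∫ t in Set.Ioc (0:ℝ) c, ((t ^ a * (c - t) ^ b : ℝ) : ℂ) := by
    refine setIntegral_congr_fun measurableSet_Ioc fun t ht => ?_
    rw [add_sub_cancel_right, add_sub_cancel_right]
    rw [← Complex.ofReal_cpow ht.1.le, ← Complex.ofReal_cpow (by linarith [ht.2] : (0:ℝ) ≤ c - t)]
    push_cast
    ring
  rw [hcongr] at h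
  have key : (↑(∫ t in Set.Ioc (0:ℝ) c, t ^ a * (c - t) ^ b) : ℂ) =
      ∫ t in Set.Ioc (0:ℝ) c, ((t ^ a * (c - t) ^ b : ℝ) : ℂ) :=
    (_root_.integral_ofReal).symm
  rw [← key] at h
  have hrhs : ((c : ℂ) ^ ((a:ℂ) + 1 + ((b:ℂ) + 1) - 1) *
      (Complex.Gamma ((a:ℂ) + 1) * Complex.Gamma ((b:ℂ) + 1) / Complex.Gamma ((a:ℂ) + 1 + ((b:ℂ) + 1))) : ℂ) =
      ((c ^ (a + b + 1) *
        (Real.Gamma (a + 1) * Real.Gamma (b + 1) / Real.Gamma (a + b + 2)) : ℝ) : ℂ) := by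
    have e1 : (a:ℂ) + 1 + ((b:ℂ) + 1) - 1 = ((a + b + 1 : ℝ) : ℂ) := by push_cast; ring
    have e2 : (a:ℂ) + 1 = ((a + 1 : ℝ) : ℂ) := by push_cast; ring
    have e3 : (b:ℂ) + 1 = ((b + 1 : ℝ) : ℂ) := by push_cast; ring
    have e4 : (a:ℂ) + 1 + ((b:ℂ) + 1) = ((a + b + 2 : ℝ) : ℂ) := by push_cast; ring
    rw [e1, e2, e3]
    rw [show ((a + 1 : ℝ) : ℂ) + ((b + 1 : ℝ) : ℂ) = ((a + b + 2 : ℝ) : ℂ) by push_cast; ring]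
    rw [← Complex.ofReal_cpow hc.le, Complex.Gamma_ofReal, Complex.Gamma_ofReal,
      Complex.Gamma_ofReal]
    push_cast
    ring
  rw [hrhs] at h
  exact Complex.ofReal_injective h

theorem dir_main : ∀ (m : ℕ) (α₀ : ℂ) (α : Fin m → ℂ), -1 < α₀.re → (∀ i, -1 < (α i).re) →
    IntegrableOn (F m α₀ α) (S m) volume ∧
    ∫ u in S m, F m α₀ α u =
      (∏ i, Complex.Gamma (α i + 1)) * Complex.Gamma (α₀ + 1) /
        Complex.Gamma (α₀ + ∑ i, α i + m + 1) := by
  intro m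
  induction m with
  | zero =>
    intro α₀ α h₀ h
    have hS : S 0 = Set.univ := by
      ext u; simp [S]
    have huniv : (volume : Measure (Fin 0 → ℝ)) Set.univ = 1 := by
      rw [← Set.pi_univ Set.univ, volume_pi_pi]
      simp
    have hconst : F 0 α₀ α = fun _ => F 0 α₀ α default :=
      funext fun u => by rw [Subsingleton.elim u default]
    have hval : F 0 α₀ α default = 1 := by
      simp [F]
    have hΓ : Complex.Gamma (α₀ + 1) ≠ 0 :=
      Complex.Gamma_ne_zero_of_re_pos (by simp only [Complex.add_re, Complex.one_re]; linarith)
    constructor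
    · rw [hS, IntegrableOn, Measure.restrict_univ, hconst]
      have : IsProbabilityMeasure (volume : Measure (Fin 0 → ℝ)) := ⟨huniv⟩
      exact integrable_const _
    · rw [hS, Measure.restrict_univ]
      rw [hconst]
      rw [integral_const, measureReal_def, huniv]
      simp only [ENNReal.toReal_one, one_smul, hval]
      rw [show (α₀ + ∑ i : Fin 0, α i + (0:ℕ) + 1) = α₀ + 1 by simp]
      rw [show (∏ i : Fin 0, Complex.Gamma (α i + 1)) = 1 from Finset.prod_of_isEmpty _]
      rw [one_mul, div_self hΓ]
  | succ m IH =>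
    intro α₀ α h₀ h
    classical
    set α' : Fin m → ℂ := fun i => α i.succ with hα'def
    set β : ℂ := α 0 + α₀ + 1 with hβ
    have h00 := h 0
    have hβre : -1 < β.re := by
      rw [hβ]
      simp only [Complex.add_re, Complex.one_re]
      linarith
    have hre0 : (0:ℝ) < (α 0 + 1).re := by
      simp only [Complex.add_re, Complex.one_re]; linarith
    have hre₀ : (0:ℝ) < (α₀ + 1).re := by
      simp only [Complex.add_re, Complex.one_re]; linarith
    have hΓβ : Complex.Gamma (β + 1) ≠ 0 :=
      Complex.Gamma_ne_zero_of_re_pos (by simp only [Complex.add_re, Complex.one_re]; linarith)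
    obtain ⟨IHint, IHval⟩ := IH β α' hβre (fun i => h i.succ)
    obtain ⟨IHrint, -⟩ := IH ((β.re : ℂ)) (fun i => (((α' i).re : ℂ)))
      (by simpa using hβre) (fun i => by simpa using h i.succ)
    -- the measurable equivalence peeling off the first coordinate
    set e := MeasurableEquiv.piFinSuccAbove (fun _ : Fin (m+1) => ℝ) 0 with he
    have hmp : MeasurePreserving e volume
        ((volume : Measure ℝ).prod (volume : Measure (Fin m → ℝ))) := by
      have h1 := measurePreserving_piFinSuccAbove (fun _ : Fin (m+1) => (volume : Measure ℝ)) 0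
      exact h1
    set T : Set (ℝ × (Fin m → ℝ)) :=
      {p | 0 ≤ p.1 ∧ (∀ i, 0 ≤ p.2 i) ∧ p.1 + ∑ i, p.2 i ≤ 1} with hT
    have hTmeas : MeasurableSet T := by
      rw [hT, Set.setOf_and]
      apply MeasurableSet.inter
      · exact measurableSet_le measurable_const measurable_fst
      · rw [Set.setOf_and]
        apply MeasurableSet.inter
        · rw [Set.setOf_forall]
          exact MeasurableSet.iInter fun i =>
            measurableSet_le measurable_const (measurable_snd.eval)
        · exact measurableSet_le
            (measurable_fst.add
              (Finset.measurable_sum _ fun i _ => measurable_snd.eval))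
            measurable_const
    set G : ℝ × (Fin m → ℝ) → ℂ := fun p =>
      T.indicator (fun p => (p.1 : ℂ) ^ (α 0) * (∏ i, (p.2 i : ℂ) ^ (α' i)) *
        (((1 - p.1 - ∑ i, p.2 i : ℝ) : ℂ) ^ α₀)) p with hGdef
    have hGmeas : Measurable G := by
      apply Measurable.indicator ?_ hTmeas
      refine Measurable.mul (Measurable.mul ?_ ?_) ?_
      · exact (Complex.measurable_ofReal.comp measurable_fst).pow measurable_const
      · exact Finset.measurable_prod _ fun i _ =>
          (Complex.measurable_ofReal.comp (measurable_snd.eval)).pow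
            measurable_const
      · exact (Complex.measurable_ofReal.comp
          (((measurable_const.sub measurable_fst)).sub
            (Finset.measurable_sum _ fun i _ => measurable_snd.eval))).pow
          measurable_const
    have hmem : ∀ u : Fin (m+1) → ℝ,
        u ∈ S (m+1) ↔ (u 0, fun j : Fin m => u j.succ) ∈ T := by
      intro u
      constructor
      · rintro ⟨h1, h2⟩
        exact ⟨h1 0, fun i => h1 i.succ, by rwa [← Fin.sum_univ_succ]⟩
      · rintro ⟨h1, h2, h3⟩
        refine ⟨fun i => Fin.cases h1 h2 i, ?_⟩
        rwa [Fin.sum_univ_succ]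
    have happ : ∀ u : Fin (m+1) → ℝ, e u = (u 0, fun j : Fin m => u j.succ) := by
      intro u
      rw [he]
      simp only [MeasurableEquiv.piFinSuccAbove_apply, Fin.removeNth, Fin.zero_succAbove,
        Fin.insertNthEquiv, Equiv.coe_fn_symm_mk]
      rfl
    have hGe : ∀ u : Fin (m+1) → ℝ, (S (m+1)).indicator (F (m+1) α₀ α) u = G (e u) := by
      intro u
      rw [happ u, hGdef]
      dsimp only
      by_cases hu : u ∈ S (m+1)
      · rw [Set.indicator_of_mem hu, Set.indicator_of_mem ((hmem u).mp hu)]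
        simp only [F, Fin.prod_univ_succ, Fin.sum_univ_succ, hα'def]
        rw [show (1 - (u 0 + ∑ j : Fin m, u j.succ) : ℝ)
            = (1 - u 0 - ∑ j : Fin m, u j.succ : ℝ) by ring]
      · rw [Set.indicator_of_notMem hu,
          Set.indicator_of_notMem (fun hc => hu ((hmem u).mpr hc))]
    -- a.e. facts
    have hae1 : ∀ᵐ v : Fin m → ℝ, ∑ i, v i ≠ 1 := by
      rw [ae_iff]
      simpa using null_sum_one m
    have hae2 : ∀ᵐ v : Fin m → ℝ, ∀ i, v i ≠ 0 := by
      rw [ae_all_iff]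
      intro i
      rw [ae_iff]
      simpa using null_coord m i
    -- slice descriptions
    have hslice : ∀ v : Fin m → ℝ, (∀ i, 0 ≤ v i) → ∑ i, v i < 1 → ∀ t : ℝ,
        G (t, v) = Set.indicator (Set.Icc 0 (1 - ∑ i, v i))
          (fun t : ℝ => (t : ℂ) ^ (α 0) * (∏ i, (v i : ℂ) ^ (α' i)) *
            (((1 - t - ∑ i, v i : ℝ) : ℂ) ^ α₀)) t := by
      intro v hv0 hvs t
      rw [hGdef]
      simp only [Set.indicator_apply, hT, Set.mem_setOf_eq, Set.mem_Icc]
      refine if_congr ?_ rfl rfl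
      constructor
      · rintro ⟨h1, -, h3⟩
        exact ⟨h1, by linarith⟩
      · rintro ⟨h1, h2⟩
        exact ⟨h1, hv0, by linarith⟩
    have hslice0 : ∀ v : Fin m → ℝ, (¬ (∀ i, 0 ≤ v i) ∨ 1 < ∑ i, v i) → ∀ t : ℝ,
        G (t, v) = 0 := by
      intro v hv t
      rw [hGdef]
      apply Set.indicator_of_notMem
      rintro ⟨h1, h2, h3⟩
      simp only at h1 h2 h3
      rcases hv with hv | hv
      · exact hv h2
      · linarith
    -- integrability of slices
    have cond1 : ∀ᵐ v : Fin m → ℝ, Integrable (fun t => G (t, v)) := by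
      filter_upwards [hae1] with v hv1
      by_cases hv0 : ∀ i, 0 ≤ v i
      · rcases lt_or_gt_of_ne hv1 with hvs | hvs
        · simp only [hslice v hv0 hvs]
          rw [integrable_indicator_iff measurableSet_Icc]
          have hc : (0:ℝ) < 1 - ∑ i, v i := by linarith
          rw [integrableOn_Icc_iff_integrableOn_Ioc]
          have hb := (beta_integrableOn hre0 hre₀ hc).mul_const (∏ i, (v i : ℂ) ^ (α' i))
          refine IntegrableOn.congr_fun hb (fun t ht => ?_) measurableSet_Ioc
          simp only [add_sub_cancel_right]
          rw [show (1 - ∑ i, v i - t : ℝ) = (1 - t - ∑ i, v i : ℝ) by ring]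
          ring
        · simp only [hslice0 v (Or.inr hvs)]
          exact integrable_zero _ _ _
      · simp only [hslice0 v (Or.inl hv0)]
        exact integrable_zero _ _ _
    -- integrability of the norm integrals
    set hR : (Fin m → ℝ) → ℂ :=
      (S m).indicator (F m ((β.re : ℂ)) (fun i => (((α' i).re : ℂ)))) with hRdef
    have hRint : Integrable hR :=
      (integrable_indicator_iff (measurableSet_S m)).mpr IHrint
    set Bval : ℝ := Real.Gamma ((α 0).re + 1) * Real.Gamma (α₀.re + 1) /
      Real.Gamma ((α 0).re + α₀.re + 2) with hBval
    have hβre' : β.re = (α 0).re + α₀.re + 1 := by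
      rw [hβ]; simp
    have cond2aux : ∀ᵐ v : Fin m → ℝ, (∫ t, ‖G (t, v)‖) = Bval * ‖hR v‖ := by
      filter_upwards [hae1, hae2] with v hv1 hv2
      by_cases hv0 : ∀ i, 0 ≤ v i
      · rcases lt_or_gt_of_ne hv1 with hvs | hvs
        · have hc : (0:ℝ) < 1 - ∑ i, v i := by linarith
          have hvpos : ∀ i, 0 < v i := fun i => lt_of_le_of_ne (hv0 i) (Ne.symm (hv2 i))
          simp only [hslice v hv0 hvs]
          simp only [norm_indicator_eq_indicator_norm]
          rw [integral_indicator measurableSet_Icc, integral_Icc_eq_integral_Ioc,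
            integral_Ioc_eq_integral_Ioo]
          have hcongr : ∫ t in Set.Ioo (0:ℝ) (1 - ∑ i, v i),
              ‖(t : ℂ) ^ (α 0) * (∏ i, (v i : ℂ) ^ (α' i)) *
                (((1 - t - ∑ i, v i : ℝ) : ℂ) ^ α₀)‖ =
              ∫ t in Set.Ioo (0:ℝ) (1 - ∑ i, v i),
                (∏ i, (v i) ^ (α' i).re) *
                  (t ^ (α 0).re * ((1 - ∑ i, v i) - t) ^ α₀.re) := by
            refine setIntegral_congr_fun measurableSet_Ioo fun t ht => ?_
            obtain ⟨ht0, htc⟩ := ht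
            rw [norm_mul, norm_mul, norm_prod]
            rw [Complex.norm_cpow_eq_rpow_re_of_pos ht0]
            rw [show (1 - t - ∑ i, v i : ℝ) = ((1 - ∑ i, v i) - t : ℝ) by ring]
            rw [Complex.norm_cpow_eq_rpow_re_of_pos (by linarith)]
            have : ∀ i : Fin m, ‖(v i : ℂ) ^ (α' i)‖ = (v i) ^ (α' i).re := fun i => by
              rw [Complex.norm_cpow_eq_rpow_re_of_pos (hvpos i)]
            simp only [this]
            ring
          rw [hcongr, integral_const_mul, ← integral_Ioc_eq_integral_Ioo,
            real_beta (by simpa using h 0) h₀ hc]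
          -- right hand side
          rw [hRdef, Set.indicator_of_mem (show v ∈ S m from ⟨hv0, hvs.le⟩)]
          simp only [F]
          rw [norm_mul, norm_prod]
          have : ∀ i : Fin m, ‖(v i : ℂ) ^ (((α' i).re : ℂ))‖ = (v i) ^ (α' i).re := fun i =>
            norm_cpow_real (hv0 i) _
          simp only [this]
          rw [norm_cpow_real (by linarith : (0:ℝ) ≤ 1 - ∑ i, v i) β.re, hβre', hBval]
          ring
        · simp only [hslice0 v (Or.inr hvs)]
          rw [hRdef, Set.indicator_of_notMem (fun hm => absurd hm.2 (not_le.mpr hvs))]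
          simp
      · simp only [hslice0 v (Or.inl hv0)]
        rw [hRdef, Set.indicator_of_notMem (fun hm => hv0 hm.1)]
        simp
    have cond2 : Integrable (fun v => ∫ t, ‖G (t, v)‖) :=
      ((hRint.norm.const_mul Bval).congr (cond2aux.mono fun v hv => hv.symm))
    have hGint : Integrable G ((volume : Measure ℝ).prod volume) :=
      (integrable_prod_iff' hGmeas.aestronglyMeasurable).mpr ⟨cond1, cond2⟩
    have hind : Integrable ((S (m+1)).indicator (F (m+1) α₀ α)) volume := by
      rw [funext hGe]
      exact (hmp.integrable_comp_emb e.measurableEmbedding).mpr hGint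
    constructor
    · exact (integrable_indicator_iff (measurableSet_S (m+1))).mp hind
    -- the value
    have hinner : ∀ᵐ v : Fin m → ℝ, (∫ t, G (t, v)) =
        (Complex.Gamma (α 0 + 1) * Complex.Gamma (α₀ + 1) / Complex.Gamma (β + 1)) *
          (S m).indicator (F m β α') v := by
      filter_upwards [hae1] with v hv1
      by_cases hv0 : ∀ i, 0 ≤ v i
      · rcases lt_or_gt_of_ne hv1 with hvs | hvs
        · have hc : (0:ℝ) < 1 - ∑ i, v i := by linarith
          simp only [hslice v hv0 hvs]
          rw [integral_indicator measurableSet_Icc, integral_Icc_eq_integral_Ioc]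
          have hcongr : ∫ t in Set.Ioc (0:ℝ) (1 - ∑ i, v i),
              (t : ℂ) ^ (α 0) * (∏ i, (v i : ℂ) ^ (α' i)) *
                (((1 - t - ∑ i, v i : ℝ) : ℂ) ^ α₀) =
              ∫ t in Set.Ioc (0:ℝ) (1 - ∑ i, v i),
                ((t : ℂ) ^ ((α 0 + 1) - 1) *
                  ((((1 - ∑ i, v i) - t : ℝ)) : ℂ) ^ ((α₀ + 1) - 1)) *
                  (∏ i, (v i : ℂ) ^ (α' i)) := by
            refine setIntegral_congr_fun measurableSet_Ioc fun t ht => ?_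
            rw [add_sub_cancel_right, add_sub_cancel_right,
              show ((1 - ∑ i, v i) - t : ℝ) = (1 - t - ∑ i, v i : ℝ) by ring]
            ring
          rw [hcongr, integral_mul_const, beta_setIntegral hre0 hre₀ hc]
          rw [Set.indicator_of_mem (show v ∈ S m from ⟨hv0, hvs.le⟩)]
          simp only [F]
          rw [show α 0 + 1 + (α₀ + 1) - 1 = β by rw [hβ]; ring,
            show α 0 + 1 + (α₀ + 1) = β + 1 by rw [hβ]; ring]
          ring
        · simp only [hslice0 v (Or.inr hvs)]
          rw [Set.indicator_of_notMem (fun hm => absurd hm.2 (not_le.mpr hvs))]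
          simp
      · simp only [hslice0 v (Or.inl hv0)]
        rw [Set.indicator_of_notMem (fun hm => hv0 hm.1)]
        simp
    have hTOT : Complex.Gamma (α₀ + ∑ i, α i + (m+1 : ℕ) + 1) ≠ 0 := by
      apply Complex.Gamma_ne_zero_of_re_pos
      have hsum : -(m:ℝ) ≤ (∑ i : Fin m, α' i).re := by
        rw [Complex.re_sum]
        calc -(m:ℝ) = ∑ _i : Fin m, (-1 : ℝ) := by simp
          _ ≤ ∑ i, (α' i).re := Finset.sum_le_sum fun i _ => (h i.succ).le
      rw [show (α₀ + ∑ i, α i + (m+1 : ℕ) + 1) =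
        α₀ + (α 0 + ∑ i, α' i) + (m+1 : ℕ) + 1 by rw [Fin.sum_univ_succ]]
      simp only [Complex.add_re, Complex.one_re, Complex.natCast_re]
      push_cast
      linarith
    rw [← integral_indicator (measurableSet_S (m+1)), funext hGe,
      hmp.integral_comp e.measurableEmbedding, integral_prod_symm G hGint,
      integral_congr_ae hinner, integral_const_mul, integral_indicator (measurableSet_S m),
      IHval]
    rw [Fin.prod_univ_succ, Fin.sum_univ_succ]
    rw [show β + ∑ i, α' i + m + 1 = α₀ + (α 0 + ∑ i, α' i) + (m+1 : ℕ) + 1 by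
      rw [hβ]; push_cast; ring]
    have cancel : ∀ (A B C D P : ℂ), C ≠ 0 → A * B / C * (P * C / D) = A * P * B / D := by
      intro A B C D P hC
      rw [div_mul_div_comm, show A * B * (P * C) = C * (A * P * B) by ring,
        mul_div_mul_left _ _ hC]
    exact cancel _ _ _ _ _ hΓβ

end

end DirichletAux

open MeasureTheory Finset

theorem dirichlet_integral (m : ℕ) (α₀ : ℂ) (α : Fin m → ℂ)
    (h₀ : -1 < α₀.re) (h : ∀ i, -1 < (α i).re) :
    ∫ u in {u : Fin m → ℝ | (∀ i, 0 ≤ u i) ∧ ∑ i, u i ≤ 1},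
        (∏ i, ((u i : ℂ) ^ (α i) / Complex.Gamma (α i + 1))) *
          (((1 - ∑ i, u i : ℝ) : ℂ) ^ α₀ / Complex.Gamma (α₀ + 1)) =
      1 / Complex.Gamma (α₀ + ∑ i, α i + m + 1) := by
  obtain ⟨-, hval⟩ := DirichletAux.dir_main m α₀ α h₀ h
  have hD : ∀ u : Fin m → ℝ,
      (∏ i, ((u i : ℂ) ^ (α i) / Complex.Gamma (α i + 1))) *
        (((1 - ∑ i, u i : ℝ) : ℂ) ^ α₀ / Complex.Gamma (α₀ + 1)) =
      DirichletAux.F m α₀ α u /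
        ((∏ i, Complex.Gamma (α i + 1)) * Complex.Gamma (α₀ + 1)) := by
    intro u
    rw [Finset.prod_div_distrib, div_mul_div_comm]
    rfl
  have hX : (∏ i, Complex.Gamma (α i + 1)) * Complex.Gamma (α₀ + 1) ≠ 0 := by
    apply mul_ne_zero
    · exact Finset.prod_ne_zero_iff.mpr fun i _ =>
        Complex.Gamma_ne_zero_of_re_pos
          (by simp only [Complex.add_re, Complex.one_re]; linarith [h i])
    · exact Complex.Gamma_ne_zero_of_re_pos
        (by simp only [Complex.add_re, Complex.one_re]; linarith)
  show ∫ u in DirichletAux.S m, _ = _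
  simp only [hD]
  rw [MeasureTheory.integral_div, hval, div_right_comm, div_self hX]
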